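/- Let g : ℕ → ℝ be nonnegative and superlinear, i.e., g(n) ≥ 0 for all n and n·g(m) ≤ m·g(n) whenever 1 ≤ m ≤ n. Let ρ, d, k be natural numbers with ρ ≤ d and k ≥ 1, and let a_ρ, a_{ρ+1}, …, a_d be natural numbers with a_i ≤ k for every i ∈ {ρ, …, d}. If g(2^d) > 0, then the total LCCV runtime satisfies the strict inequality ∑_{i=ρ}^{d} a_i · g(2^i) < 2 · k · g(2^d); that is, the runtime of LCCV is less than twice the runtime of kCV. -/

import Mathlib

/-- The runtime of LCCV is strictly less than twice the runtime of kCV: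
for a nonnegative superlinear runtime function `g`, anchor exponents `ρ, …, d`,
at most `k` evaluations per anchor, and `g (2^d) > 0`, we have
`∑_{i=ρ}^{d} a_i · g(2^i) < 2 · k · g(2^d)`. -/
theorem lccv_runtime_lt_twice_kcv
    (g : ℕ → ℝ)
    (hg_nonneg : ∀ n, 0 ≤ g n)
    (hg_super : ∀ m n : ℕ, 1 ≤ m → m ≤ n → (n : ℝ) * g m ≤ (m : ℝ) * g n)
    (ρ d k : ℕ) (hρd : ρ ≤ d) (hk : 1 ≤ k)
    (a : ℕ → ℕ) (ha : ∀ i, ρ ≤ i → i ≤ d → a i ≤ k)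
    (hpos : 0 < g (2 ^ d)) :
    ∑ i ∈ Finset.Icc ρ d, (a i : ℝ) * g (2 ^ i) < 2 * (k : ℝ) * g (2 ^ d) := by
  have h2d : (0:ℝ) < 2 ^ d := by positivity
  have hstep : ∀ i ∈ Finset.Icc ρ d,
      (a i : ℝ) * g (2 ^ i) ≤ (k : ℝ) * g (2 ^ d) / 2 ^ d * 2 ^ i := by
    intro i hi
    rw [Finset.mem_Icc] at hi
    have hsup := hg_super (2 ^ i) (2 ^ d) (Nat.one_le_two_pow)
      (Nat.pow_le_pow_right (by norm_num) hi.2)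
    push_cast at hsup
    have hgi : g (2 ^ i) ≤ 2 ^ i * g (2 ^ d) / 2 ^ d := by
      rw [le_div_iff₀ h2d]
      linarith
    have hai : (a i : ℝ) ≤ k := by exact_mod_cast ha i hi.1 hi.2
    calc (a i : ℝ) * g (2 ^ i) ≤ (k : ℝ) * (2 ^ i * g (2 ^ d) / 2 ^ d) := by
          apply mul_le_mul hai hgi (hg_nonneg _) (by positivity)
      _ = (k : ℝ) * g (2 ^ d) / 2 ^ d * 2 ^ i := by ring
  calc ∑ i ∈ Finset.Icc ρ d, (a i : ℝ) * g (2 ^ i)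
      ≤ ∑ i ∈ Finset.Icc ρ d, (k : ℝ) * g (2 ^ d) / 2 ^ d * 2 ^ i :=
        Finset.sum_le_sum hstep
    _ = (k : ℝ) * g (2 ^ d) / 2 ^ d * ∑ i ∈ Finset.Icc ρ d, (2:ℝ) ^ i := by
        rw [Finset.mul_sum]
    _ < 2 * (k : ℝ) * g (2 ^ d) := by
        have hsum : ∑ i ∈ Finset.Icc ρ d, (2:ℝ) ^ i = (2 ^ (d + 1) - 2 ^ ρ) / (2 - 1) := by
          rw [← Finset.Ico_add_one_right_eq_Icc, geom_sum_Ico (by norm_num) (Nat.le_add_right_of_le hρd : ρ ≤ d + 1)]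
        rw [hsum]
        have hρ : (0:ℝ) < 2 ^ ρ := by positivity
        have hk' : (1:ℝ) ≤ k := by exact_mod_cast hk
        rw [div_mul_eq_mul_div, div_lt_iff₀ h2d]
        have : (2 ^ (d + 1) - 2 ^ ρ) / (2 - 1) < (2:ℝ) * 2 ^ d := by
          rw [pow_succ]; norm_num; linarith
        nlinarith [mul_pos (mul_pos (lt_of_lt_of_le one_pos hk') hpos) h2d]
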